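/- arXiv:2409.18689 — 3 statements merged into one kernel-verified Lean document; each statement's English description precedes it below -/
import Mathlib

section
/- Let E1 and E2 be independent random variables taking values in the group G = (ZMod 2)², each depolarizing with rates ε1 and ε2 respectively (ε1, ε2 ∈ [0,1]). Then P(E1 + E2 ≠ 0) = ε1 + ε2 − (4/3)·ε1·ε2. -/
/-- A random variable taking values in a finite additive group `G` is *depolarizing*
with rate `ε` if it equals `0` with probability `1 - ε` and equals each of the
`|G| - 1` nonzero elements with probability `ε / (|G| - 1)`. -/
def IsDepolarizing {G : Type*} [Fintype G] [AddGroup G] (p : G → ℝ) (ε : ℝ) : Prop :=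
  p 0 = 1 - ε ∧ ∀ g : G, g ≠ 0 → p g = ε / ((Fintype.card G : ℝ) - 1)

/-- If `E1` and `E2` are independent random variables on `G = (ZMod 2)²` (single-qubit
Pauli errors modulo phase), each depolarizing with rates `ε1` and `ε2` respectively,
then `P(E1 + E2 ≠ 0) = ε1 + ε2 − (4/3)·ε1·ε2`.  Independence means the joint
distribution is the product of the marginals. -/
theorem depolarizing_sum_ne_zero_single_qubit
    (ε1 ε2 : ℝ) (hε1 : ε1 ∈ Set.Icc (0 : ℝ) 1) (hε2 : ε2 ∈ Set.Icc (0 : ℝ) 1)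
    (p1 p2 : ZMod 2 × ZMod 2 → ℝ)
    (h1 : IsDepolarizing p1 ε1) (h2 : IsDepolarizing p2 ε2) :
    (∑ a : ZMod 2 × ZMod 2, ∑ b : ZMod 2 × ZMod 2, if a + b ≠ 0 then p1 a * p2 b else 0)
      = ε1 + ε2 - (4 / 3) * (ε1 * ε2) := by
  obtain ⟨h10, h1n⟩ := h1
  obtain ⟨h20, h2n⟩ := h2
  have hc : ((Fintype.card (ZMod 2 × ZMod 2) : ℝ) - 1) = 3 := by norm_num
  simp only [hc] at h1n h2n
  have hp1 : ∀ g, p1 g = if g = 0 then 1 - ε1 else ε1 / 3 := by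
    intro g; by_cases hg : g = 0
    · simp [hg, h10]
    · simp [hg, h1n g hg]
  have hp2 : ∀ g, p2 g = if g = 0 then 1 - ε2 else ε2 / 3 := by
    intro g; by_cases hg : g = 0
    · simp [hg, h20]
    · simp [hg, h2n g hg]
  have huniv : (Finset.univ : Finset (ZMod 2 × ZMod 2)) =
      {(0,0), (0,1), (1,0), (1,1)} := by decide
  simp only [hp1, hp2, huniv]
  norm_num [Finset.sum_insert, Finset.mem_insert, Prod.ext_iff,
    show (2:ZMod 2) = 0 from rfl]
  have h2z : (2:ZMod 2) = 0 := by decide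
  rw [if_pos h2z]
  ring
end

section
/- Let E1 and E2 be independent random variables taking values in the group G = (ZMod 2)⁴, each depolarizing with rates ε1 and ε2 respectively (ε1, ε2 ∈ [0,1]). Then P(E1 + E2 ≠ 0) = ε1 + ε2 − (16/15)·ε1·ε2. -/
lemma card_G : (Fintype.card (Fin 4 → ZMod 2) : ℝ) = 16 := by
  simp [Fintype.card_fun]

lemma sum_split (f : (Fin 4 → ZMod 2) → ℝ) :
    ∑ g : Fin 4 → ZMod 2, f g = f 0 + ∑ g ∈ ({(0 : Fin 4 → ZMod 2)}ᶜ : Finset _), f g :=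
  Fintype.sum_eq_add_sum_compl 0 f

lemma card_compl : (({(0 : Fin 4 → ZMod 2)}ᶜ : Finset _)).card = 15 := by
  rw [Finset.card_compl]
  simp [Fintype.card_fun]

lemma sum_depol {p : (Fin 4 → ZMod 2) → ℝ} {ε : ℝ} (h : IsDepolarizing p ε) :
    ∑ g : Fin 4 → ZMod 2, p g = 1 := by
  rw [sum_split, h.1, Finset.sum_congr rfl (fun g hg => h.2 g (by simpa using hg)),
    Finset.sum_const, card_compl, card_G]
  ring

lemma sum_diag {p1 p2 : (Fin 4 → ZMod 2) → ℝ} {ε1 ε2 : ℝ}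
    (h1 : IsDepolarizing p1 ε1) (h2 : IsDepolarizing p2 ε2) :
    ∑ g : Fin 4 → ZMod 2, p1 g * p2 g = (1 - ε1) * (1 - ε2) + ε1 * ε2 / 15 := by
  rw [sum_split, h1.1, h2.1,
    Finset.sum_congr rfl (fun g hg => by
      rw [h1.2 g (by simpa using hg), h2.2 g (by simpa using hg)]),
    Finset.sum_const, card_compl, card_G]
  ring

/-- If `E1` and `E2` are independent random variables on `G = (ZMod 2)⁴` (two-qubit
Pauli errors modulo phase), each depolarizing with rates `ε1` and `ε2` respectively,
then `P(E1 + E2 ≠ 0) = ε1 + ε2 − (16/15)·ε1·ε2`.  Independence means the joint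
distribution is the product of the marginals. -/
theorem depolarizing_sum_ne_zero_two_qubit
    (ε1 ε2 : ℝ) (hε1 : ε1 ∈ Set.Icc (0 : ℝ) 1) (hε2 : ε2 ∈ Set.Icc (0 : ℝ) 1)
    (p1 p2 : (Fin 4 → ZMod 2) → ℝ)
    (h1 : IsDepolarizing p1 ε1) (h2 : IsDepolarizing p2 ε2) :
    (∑ a : Fin 4 → ZMod 2, ∑ b : Fin 4 → ZMod 2, if a + b ≠ 0 then p1 a * p2 b else 0)
      = ε1 + ε2 - (16 / 15) * (ε1 * ε2) := by
  have key : ∀ a : Fin 4 → ZMod 2,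
      (∑ b : Fin 4 → ZMod 2, if a + b ≠ 0 then p1 a * p2 b else 0)
        = (∑ b : Fin 4 → ZMod 2, p1 a * p2 b) - p1 a * p2 a := by
    intro a
    have hcond : ∀ b : Fin 4 → ZMod 2, (a + b = 0) ↔ (b = a) := by
      intro b
      constructor
      · intro h
        have := eq_neg_of_add_eq_zero_right h
        simpa [CharTwo.neg_eq] using this
      · rintro rfl
        exact CharTwo.add_self_eq_zero _
    have : ∀ b : Fin 4 → ZMod 2,
        (if a + b ≠ 0 then p1 a * p2 b else 0)
          = p1 a * p2 b - (if b = a then p1 a * p2 b else 0) := by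
      intro b
      by_cases hb : b = a
      · simp [hb, hcond, CharTwo.add_self_eq_zero a]
      · simp [hb, (hcond b).not.mpr hb]
    rw [Finset.sum_congr rfl (fun b _ => this b), Finset.sum_sub_distrib,
      Finset.sum_ite_eq' Finset.univ a]
    simp
  rw [Finset.sum_congr rfl (fun a _ => key a), Finset.sum_sub_distrib]
  have ht : ∑ a : Fin 4 → ZMod 2, ∑ b : Fin 4 → ZMod 2, p1 a * p2 b = 1 := by
    rw [← Finset.sum_mul_sum, sum_depol h1, sum_depol h2, one_mul]
  rw [ht, sum_diag h1 h2]
  ring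
end

section
/- Let G be a finite group with |G| = g ≥ 2, and let E1, E2 be independent G-valued random variables, each depolarizing with rates ε1 and ε2 respectively (ε1, ε2 ∈ [0,1]). Set ε' = ε1 + ε2 − (g/(g−1))·ε1·ε2. Then the product E1·E2 is again depolarizing with rate ε': that is, P(E1·E2 = 1) = 1 − ε' and P(E1·E2 = h) = ε'/(g − 1) for every h ≠ 1. -/
/-- A random variable taking values in a finite (multiplicative) group `G` is
*depolarizing* with rate `ε` if it equals the identity with probability `1 - ε` and
equals each of the `|G| - 1` nonidentity elements with probability `ε / (|G| - 1)`. -/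
def IsDepolarizingMul {G : Type*} [Fintype G] [Group G] (p : G → ℝ) (ε : ℝ) : Prop :=
  p 1 = 1 - ε ∧ ∀ h : G, h ≠ 1 → p h = ε / ((Fintype.card G : ℝ) - 1)

/-- Let `G` be a finite group with `|G| = g ≥ 2`, and let `E1, E2` be independent
`G`-valued random variables, depolarizing with rates `ε1` and `ε2` respectively
(`ε1, ε2 ∈ [0,1]`).  Set `ε' = ε1 + ε2 − (g/(g−1))·ε1·ε2`.  Then the product `E1·E2`
(whose distribution is the convolution of the two marginal distributions, by
independence) is again depolarizing with rate `ε'`. -/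
theorem depolarizing_mul_depolarizing
    {G : Type*} [Fintype G] [Group G] [DecidableEq G]
    (g : ℕ) (hcard : Fintype.card G = g) (hg : 2 ≤ g)
    (ε1 ε2 ε' : ℝ) (hε1 : ε1 ∈ Set.Icc (0 : ℝ) 1) (hε2 : ε2 ∈ Set.Icc (0 : ℝ) 1)
    (hε' : ε' = ε1 + ε2 - ((g : ℝ) / ((g : ℝ) - 1)) * (ε1 * ε2))
    (p1 p2 : G → ℝ)
    (h1 : IsDepolarizingMul p1 ε1) (h2 : IsDepolarizingMul p2 ε2) :
    IsDepolarizingMul (fun h : G => ∑ a : G, ∑ b : G, if a * b = h then p1 a * p2 b else 0) ε' := by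
  have hg2 : (2 : ℝ) ≤ (g : ℝ) := by exact_mod_cast hg
  have hg1 : (g : ℝ) - 1 ≠ 0 := by linarith
  have key : ∀ h : G, (∑ a : G, ∑ b : G, if a * b = h then p1 a * p2 b else 0)
      = ∑ a : G, p1 a * p2 (a⁻¹ * h) := by
    intro h
    refine Finset.sum_congr rfl fun a _ => ?_
    rw [Finset.sum_eq_single (a⁻¹ * h)]
    · simp
    · intro b _ hb
      rw [if_neg]
      intro he
      exact hb (eq_inv_mul_of_mul_eq he)
    · simp
  constructor
  · show (∑ a : G, ∑ b : G, if a * b = 1 then p1 a * p2 b else 0) = 1 - ε'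
    rw [key]
    rw [← Finset.add_sum_erase _ _ (Finset.mem_univ (1 : G))]
    have hrest : ∀ a ∈ Finset.univ.erase (1 : G),
        p1 a * p2 (a⁻¹ * 1) = ε1 / ((g : ℝ) - 1) * (ε2 / ((g : ℝ) - 1)) := by
      intro a ha
      have ha1 : a ≠ 1 := Finset.ne_of_mem_erase ha
      rw [mul_one, h1.2 a ha1, h2.2 a⁻¹ (inv_ne_one.mpr ha1), hcard]
    rw [Finset.sum_congr rfl hrest, Finset.sum_const,
      Finset.card_erase_of_mem (Finset.mem_univ _), Finset.card_univ, hcard]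
    simp only [inv_one, one_mul, h1.1, h2.1, nsmul_eq_mul]
    rw [Nat.cast_sub (show 1 ≤ g by omega), Nat.cast_one, hε']
    field_simp
    ring
  · intro h hne
    show (∑ a : G, ∑ b : G, if a * b = h then p1 a * p2 b else 0)
      = ε' / ((Fintype.card G : ℝ) - 1)
    rw [key, hcard]
    rw [← Finset.add_sum_erase _ _ (Finset.mem_univ (1 : G))]
    have hmem : h ∈ Finset.univ.erase (1 : G) :=
      Finset.mem_erase.mpr ⟨hne, Finset.mem_univ _⟩
    rw [← Finset.add_sum_erase _ _ hmem]
    have hrest : ∀ a ∈ (Finset.univ.erase (1 : G)).erase h,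
        p1 a * p2 (a⁻¹ * h) = ε1 / ((g : ℝ) - 1) * (ε2 / ((g : ℝ) - 1)) := by
      intro a ha
      have hah : a ≠ h := Finset.ne_of_mem_erase ha
      have ha1 : a ≠ 1 := Finset.ne_of_mem_erase (Finset.mem_of_mem_erase ha)
      have h2' : a⁻¹ * h ≠ 1 := by
        intro hc
        exact hah (by rw [← eq_of_inv_mul_eq_one hc])
      rw [h1.2 a ha1, h2.2 _ h2', hcard]
    rw [Finset.sum_congr rfl hrest, Finset.sum_const,
      Finset.card_erase_of_mem hmem,
      Finset.card_erase_of_mem (Finset.mem_univ _), Finset.card_univ, hcard,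
      Nat.sub_sub]
    simp only [inv_one, one_mul, inv_mul_cancel, h1.1, h2.1, nsmul_eq_mul,
      h1.2 h hne, h2.2 h hne, hcard]
    rw [Nat.cast_sub (show 1 + 1 ≤ g by omega), hε']
    push_cast
    field_simp
    ring
end
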